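/- Fix a mutation rate μ ∈ (0,1] and an interior reference profile r ∈ Δ°(A₁) × Δ°(A₂), and let π^{μ,r} be a stationary point of RMD with reference r. Then π^{μ,r} is a 2μ-Nash equilibrium: explt(π^{μ,r}) ≤ 2μ. -/
import Mathlib


open Finset Real

noncomputable section

/-- `p` is a point of the probability simplex over `A`. -/
def isSimplex {A : Type*} [Fintype A] (p : A → ℝ) : Prop :=
  (∀ a, 0 ≤ p a) ∧ ∑ a, p a = 1

/-- `p` is a point of the relative interior of the probability simplex over `A`. -/
def isInterior {A : Type*} [Fintype A] (p : A → ℝ) : Prop :=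
  (∀ a, 0 < p a) ∧ ∑ a, p a = 1

/-- Player 1's expected utility in the zero-sum game with payoff `u`. -/
def v1 {A1 A2 : Type*} [Fintype A1] [Fintype A2] (u : A1 → A2 → ℝ)
    (x : A1 → ℝ) (y : A2 → ℝ) : ℝ :=
  ∑ a, ∑ b, x a * y b * u a b

/-- Player 1's conditional expected utility of action `a` against `y`. -/
def q1 {A1 A2 : Type*} [Fintype A2] (u : A1 → A2 → ℝ) (y : A2 → ℝ) (a : A1) : ℝ :=
  ∑ b, y b * u a b

/-- Player 2's conditional expected utility of action `b` against `x` (utility `-u`). -/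
def q2 {A1 A2 : Type*} [Fintype A1] (u : A1 → A2 → ℝ) (x : A1 → ℝ) (b : A2) : ℝ :=
  ∑ a, x a * (- u a b)

/-- Kullback–Leibler divergence. -/
def KL {A : Type*} [Fintype A] (p q : A → ℝ) : ℝ :=
  ∑ a, p a * Real.log (p a / q a)

/-- Sum of KL divergences over the two players. -/
def KL2 {A1 A2 : Type*} [Fintype A1] [Fintype A2]
    (σ σ' : (A1 → ℝ) × (A2 → ℝ)) : ℝ :=
  KL σ.1 σ'.1 + KL σ.2 σ'.2

/-- `σ` is a stationary point of the replicator-mutator dynamics with mutation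
rate `μ` and reference profile `r`. -/
def isStationary {A1 A2 : Type*} [Fintype A1] [Fintype A2] (u : A1 → A2 → ℝ) (μ : ℝ)
    (r σ : (A1 → ℝ) × (A2 → ℝ)) : Prop :=
  isSimplex σ.1 ∧ isSimplex σ.2 ∧
  (∀ a, σ.1 a * (q1 u σ.2 a - v1 u σ.1 σ.2) + μ * (r.1 a - σ.1 a) = 0) ∧
  (∀ b, σ.2 b * (q2 u σ.1 b - (- v1 u σ.1 σ.2)) + μ * (r.2 b - σ.2 b) = 0)

/-- One multiplicative-weights step with learning rate `η` and gain vector `g`. -/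
def mwuStep {A : Type*} [Fintype A] (η : ℝ) (g p : A → ℝ) : A → ℝ :=
  fun a => p a * Real.exp (η * g a) / ∑ a', p a' * Real.exp (η * g a')

/-- Player 1's mutation gradient. -/
def qmu1 {A1 A2 : Type*} [Fintype A2] (u : A1 → A2 → ℝ) (μ : ℝ) (r1 : A1 → ℝ)
    (x : A1 → ℝ) (y : A2 → ℝ) (a : A1) : ℝ :=
  q1 u y a + μ / x a * (r1 a - x a)

/-- Player 2's mutation gradient. -/
def qmu2 {A1 A2 : Type*} [Fintype A1] (u : A1 → A2 → ℝ) (μ : ℝ) (r2 : A2 → ℝ)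
    (x : A1 → ℝ) (y : A2 → ℝ) (b : A2) : ℝ :=
  q2 u x b + μ / y b * (r2 b - y b)

/-- `σ` is a trajectory of M2WU with full feedback, learning rates `η`. -/
def isM2WU {A1 A2 : Type*} [Fintype A1] [Fintype A2] (u : A1 → A2 → ℝ) (μ : ℝ)
    (r : (A1 → ℝ) × (A2 → ℝ)) (η : ℕ → ℝ) (σ : ℕ → (A1 → ℝ) × (A2 → ℝ)) : Prop :=
  ∀ t, (σ (t+1)).1 = mwuStep (η t) (qmu1 u μ r.1 (σ t).1 (σ t).2) (σ t).1 ∧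
       (σ (t+1)).2 = mwuStep (η t) (qmu2 u μ r.2 (σ t).1 (σ t).2) (σ t).2

/-- Exploitability of a strategy profile. -/
def explt {A1 A2 : Type*} [Fintype A1] [Fintype A2] (u : A1 → A2 → ℝ)
    (σ : (A1 → ℝ) × (A2 → ℝ)) : ℝ :=
  (⨆ x : {p : A1 → ℝ // isSimplex p}, v1 u x.1 σ.2) +
  (⨆ y : {p : A2 → ℝ // isSimplex p}, - v1 u σ.1 y.1)

/-- Nash equilibrium of the two-player zero-sum game with payoff `u`. -/
def isNash {A1 A2 : Type*} [Fintype A1] [Fintype A2] (u : A1 → A2 → ℝ)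
    (σ : (A1 → ℝ) × (A2 → ℝ)) : Prop :=
  isSimplex σ.1 ∧ isSimplex σ.2 ∧
  (∀ y, isSimplex y → v1 u σ.1 σ.2 ≤ v1 u σ.1 y) ∧
  (∀ x, isSimplex x → v1 u x σ.2 ≤ v1 u σ.1 σ.2)

/-- ℓ¹ norm of a finitely supported vector. -/
def l1norm {A : Type*} [Fintype A] (p : A → ℝ) : ℝ := ∑ a, |p a|

/-- Euclidean distance between two profiles (concatenated coordinates). -/
def dist2 {A1 A2 : Type*} [Fintype A1] [Fintype A2]
    (σ σ' : (A1 → ℝ) × (A2 → ℝ)) : ℝ :=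
  Real.sqrt ((∑ a, (σ.1 a - σ'.1 a) ^ 2) + (∑ b, (σ.2 b - σ'.2 b) ^ 2))
/-- **Stationary points of RMD are 2μ-Nash equilibria.** -/
theorem stationary_point_exploitability {A1 A2 : Type*} [Fintype A1] [Fintype A2]
    [Nonempty A1] [Nonempty A2]
    (u : A1 → A2 → ℝ)
    (μ : ℝ) (hμ : 0 < μ ∧ μ ≤ 1)
    (r : (A1 → ℝ) × (A2 → ℝ)) (hr1 : isInterior r.1) (hr2 : isInterior r.2)
    (σst : (A1 → ℝ) × (A2 → ℝ)) (hst : isStationary u μ r σst)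
    (hst1 : isInterior σst.1) (hst2 : isInterior σst.2) :
    explt u σst ≤ 2 * μ := by
  obtain ⟨hμ0, -⟩ := hμ
  obtain ⟨hs1, hs2, h1, h2⟩ := hst
  set v := v1 u σst.1 σst.2 with hv
  have hq1 : ∀ a, q1 u σst.2 a ≤ v + μ := by
    intro a
    have h := h1 a
    have hσ := hst1.1 a
    have hr := hr1.1 a
    nlinarith [mul_pos hμ0 hr]
  have hq2 : ∀ b, q2 u σst.1 b ≤ -v + μ := by
    intro b
    have h := h2 b
    have hσ := hst2.1 b
    have hr := hr2.1 b
    nlinarith [mul_pos hμ0 hr]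
  have key1 : ∀ x : A1 → ℝ, isSimplex x → v1 u x σst.2 ≤ v + μ := by
    intro x hx
    have hrw : v1 u x σst.2 = ∑ a, x a * q1 u σst.2 a := by
      simp [v1, q1, Finset.mul_sum, mul_assoc]
    rw [hrw]
    calc ∑ a, x a * q1 u σst.2 a ≤ ∑ a, x a * (v + μ) :=
          Finset.sum_le_sum fun a _ => mul_le_mul_of_nonneg_left (hq1 a) (hx.1 a)
      _ = v + μ := by rw [← Finset.sum_mul, hx.2, one_mul]
  have key2 : ∀ y : A2 → ℝ, isSimplex y → - v1 u σst.1 y ≤ -v + μ := by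
    intro y hy
    have hrw : - v1 u σst.1 y = ∑ b, y b * q2 u σst.1 b := by
      simp only [v1, q2, Finset.mul_sum]
      rw [← Finset.sum_neg_distrib, Finset.sum_comm]
      refine Finset.sum_congr rfl fun a _ => ?_
      rw [← Finset.sum_neg_distrib]
      exact Finset.sum_congr rfl fun b _ => by ring
    rw [hrw]
    calc ∑ b, y b * q2 u σst.1 b ≤ ∑ b, y b * (-v + μ) :=
          Finset.sum_le_sum fun b _ => mul_le_mul_of_nonneg_left (hq2 b) (hy.1 b)
      _ = -v + μ := by rw [← Finset.sum_mul, hy.2, one_mul]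
  haveI : Nonempty {p : A1 → ℝ // isSimplex p} := ⟨⟨σst.1, hs1⟩⟩
  haveI : Nonempty {p : A2 → ℝ // isSimplex p} := ⟨⟨σst.2, hs2⟩⟩
  have b1 : (⨆ x : {p : A1 → ℝ // isSimplex p}, v1 u x.1 σst.2) ≤ v + μ :=
    ciSup_le fun x => key1 x.1 x.2
  have b2 : (⨆ y : {p : A2 → ℝ // isSimplex p}, - v1 u σst.1 y.1) ≤ -v + μ :=
    ciSup_le fun y => key2 y.1 y.2
  unfold explt
  linarith
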